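/- arXiv:1511.06022 — 2 statements merged into one kernel-verified Lean document; each statement's English description precedes it below -/
import Mathlib

section
/- Let Σ be a finite alphabet with weight function w : Σ → ℕ. Define the unweighting map that replaces every symbol ℓ in a sequence by w(ℓ) consecutive copies of ℓ. Then for any two sequences P₁, P₂ over Σ, the maximum total weight of a common subsequence of P₁ and P₂ equals the length of the longest common subsequence of the unweighted expansions of P₁ and P₂. -/
variable {σ : Type} [DecidableEq σ]

lemma expand_sublist (w : σ → ℕ) {X P : List σ} (h : X.Sublist P) :
    (X.flatMap fun a => List.replicate (w a) a).Sublist (P.flatMap fun a => List.replicate (w a) a) := by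
  induction h with
  | slnil => simp
  | cons a h ih =>
      simp only [List.flatMap_cons]
      exact ih.trans (List.sublist_append_right _ _)
  | cons_cons a h ih =>
      simp only [List.flatMap_cons]
      exact (List.Sublist.refl _).append ih

lemma drop_of_sublist_rep {a : σ} {m : ℕ} {Z L : List σ}
    (h : Z.Sublist (List.replicate m a ++ L)) :
    ∃ j ≤ m, (Z.drop j).Sublist L ∧ Z.take j = List.replicate j a := by
  induction m generalizing Z with
  | zero => exact ⟨0, le_refl 0, by simpa using h, rfl⟩
  | succ m ih =>
      rw [List.replicate_succ, List.cons_append] at h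
      cases h with
      | cons _ h =>
          obtain ⟨j, hj, h1, h2⟩ := ih h
          exact ⟨j, hj.trans (Nat.le_succ m), h1, h2⟩
      | cons_cons _ h =>
          obtain ⟨j, hj, h1, h2⟩ := ih h
          refine ⟨j + 1, Nat.succ_le_succ hj, by simpa using h1, ?_⟩
          simp [List.take_succ_cons, h2, List.replicate_succ]

lemma sublist_right_of_head_not_mem {a : σ} {X L₁ L₂ : List σ}
    (h : (a :: X).Sublist (L₁ ++ L₂)) (ha : a ∉ L₁) : (a :: X).Sublist L₂ := by
  induction L₁ with
  | nil => simpa using h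
  | cons b t ih =>
      simp only [List.mem_cons, not_or] at ha
      rw [List.cons_append] at h
      cases h with
      | cons _ h => exact ih h ha.2
      | cons_cons _ h => exact absurd rfl ha.1

lemma mem_expand {w : σ → ℕ} {a : σ} {P : List σ}
    (h : a ∈ P.flatMap fun a => List.replicate (w a) a) : a ∈ P := by
  simp only [List.mem_flatMap, List.mem_replicate] at h
  obtain ⟨b, hb, _, rfl⟩ := h
  exact hb

lemma first_occ {a : σ} {l : List σ} (h : a ∈ l) :
    ∃ s t, a ∉ s ∧ l = s ++ a :: t := by
  induction l with
  | nil => simp at h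
  | cons b t ih =>
      by_cases hab : a = b
      · exact ⟨[], t, by simp, by simp [hab]⟩
      · obtain ⟨s, t', hs, ht⟩ := ih (by
          rcases List.mem_cons.1 h with h | h
          · exact absurd h hab
          · exact h)
        exact ⟨b :: s, t', by simp [hs, hab], by simp [ht]⟩

lemma key (w : σ → ℕ) : ∀ (P₁ P₂ X : List σ),
    X.Sublist (P₁.flatMap fun a => List.replicate (w a) a) →
    X.Sublist (P₂.flatMap fun a => List.replicate (w a) a) →
    ∃ Y : List σ, Y.Sublist P₁ ∧ Y.Sublist P₂ ∧ X.length ≤ (Y.map w).sum := by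
  intro P₁
  induction P₁ with
  | nil =>
      intro P₂ X h1 h2
      simp only [List.flatMap_nil, List.sublist_nil] at h1
      exact ⟨[], List.nil_sublist _, List.nil_sublist _, by simp [h1]⟩
  | cons a P₁' ih =>
      intro P₂ X h1 h2
      rw [List.flatMap_cons] at h1
      obtain ⟨j, hj, hd1, ht1⟩ := drop_of_sublist_rep h1
      rcases Nat.eq_zero_or_pos j with rfl | hjpos
      · simp only [List.drop_zero] at hd1
        obtain ⟨Y, hY1, hY2, hY3⟩ := ih P₂ X hd1 h2
        exact ⟨Y, hY1.cons a, hY2, hY3⟩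
      · -- X starts with a
        obtain ⟨X', rfl⟩ : ∃ X', X = a :: X' := by
          cases X with
          | nil => simp at ht1; omega
          | cons b X' =>
              refine ⟨X', ?_⟩
              obtain ⟨j', rfl⟩ := Nat.exists_eq_add_of_lt hjpos
              simp [List.replicate_succ, Nat.add_comm] at ht1
              rw [ht1.1]
        have haP₂ : a ∈ P₂ := mem_expand (h2.subset List.mem_cons_self)
        obtain ⟨Q, R, hQ, rfl⟩ := first_occ haP₂
        have haEQ : a ∉ Q.flatMap fun a => List.replicate (w a) a :=
          fun h => hQ (mem_expand h)
        rw [List.flatMap_append, List.flatMap_cons, ← List.append_assoc] at h2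
        rw [List.append_assoc] at h2
        have h2' := sublist_right_of_head_not_mem h2 haEQ
        obtain ⟨j', hj', hd2, ht2⟩ := drop_of_sublist_rep h2'
        set X := a :: X' with hX
        set jm := max j j' with hjm
        have htm : X.take jm = List.replicate jm a := by
          rcases le_total j j' with h | h
          · simpa [hjm, Nat.max_eq_right h] using ht2
          · simpa [hjm, Nat.max_eq_left h] using ht1
        have hjmlen : jm ≤ X.length := by
          have := congrArg List.length htm
          simp at this; omega
        have hdm1 : (X.drop jm).Sublist (P₁'.flatMap fun a => List.replicate (w a) a) := by
          have : X.drop jm = (X.drop j).drop (jm - j) := by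
            rw [List.drop_drop]; congr 1; omega
          rw [this]
          exact (List.drop_sublist _ _).trans hd1
        have hdm2 : (X.drop jm).Sublist (R.flatMap fun a => List.replicate (w a) a) := by
          have : X.drop jm = (X.drop j').drop (jm - j') := by
            rw [List.drop_drop]; congr 1; omega
          rw [this]
          exact (List.drop_sublist _ _).trans hd2
        obtain ⟨Y, hY1, hY2, hY3⟩ := ih R _ hdm1 hdm2
        refine ⟨a :: Y, hY1.cons₂ a, ?_, ?_⟩
        · exact ((hY2.cons₂ a).trans (List.sublist_append_right Q (a :: R)))
        · have hlen : (X.drop jm).length = X.length - jm := List.length_drop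
          simp only [List.map_cons, List.sum_cons]
          omega

/-- Weighted LCS equals LCS of the unweighted expansions: the maximum total weight of a
common subsequence of `P₁`, `P₂` equals the maximum length of a common subsequence of the
sequences obtained by replacing each symbol `ℓ` with `w ℓ` consecutive copies of `ℓ`. -/
theorem stmt3 {σ : Type} [DecidableEq σ] (w : σ → ℕ) (P₁ P₂ : List σ) :
    sSup {v | ∃ X : List σ, X.Sublist P₁ ∧ X.Sublist P₂ ∧ (X.map w).sum = v} =
      sSup {v | ∃ X : List σ,
        X.Sublist (P₁.flatMap fun a => List.replicate (w a) a) ∧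
        X.Sublist (P₂.flatMap fun a => List.replicate (w a) a) ∧ X.length = v} := by
  set S₁ := {v | ∃ X : List σ, X.Sublist P₁ ∧ X.Sublist P₂ ∧ (X.map w).sum = v}
  set S₂ := {v | ∃ X : List σ,
        X.Sublist (P₁.flatMap fun a => List.replicate (w a) a) ∧
        X.Sublist (P₂.flatMap fun a => List.replicate (w a) a) ∧ X.length = v}
  have hne₁ : S₁.Nonempty := ⟨0, [], List.nil_sublist _, List.nil_sublist _, rfl⟩
  have hne₂ : S₂.Nonempty := ⟨0, [], List.nil_sublist _, List.nil_sublist _, rfl⟩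
  have hbdd₁ : BddAbove S₁ := by
    refine ⟨(P₁.map w).sum, fun v hv => ?_⟩
    obtain ⟨X, hX1, _, rfl⟩ := hv
    exact List.Sublist.sum_le_sum (hX1.map w) (fun x _ => Nat.zero_le x)
  have hbdd₂ : BddAbove S₂ := by
    refine ⟨(P₁.flatMap fun a => List.replicate (w a) a).length, fun v hv => ?_⟩
    obtain ⟨X, hX1, _, rfl⟩ := hv
    exact hX1.length_le
  refine le_antisymm (csSup_le_csSup hbdd₂ hne₁ ?_) (csSup_le hne₂ ?_)
  · rintro v ⟨X, hX1, hX2, rfl⟩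
    refine ⟨X.flatMap fun a => List.replicate (w a) a, expand_sublist w hX1, expand_sublist w hX2, ?_⟩
    simp [List.length_flatMap, Function.comp_def]
  · rintro v ⟨X, hX1, hX2, rfl⟩
    obtain ⟨Y, hY1, hY2, hY3⟩ := key w P₁ P₂ X hX1 hX2
    exact hY3.trans (le_csSup hbdd₁ ⟨Y, hY1, hY2, rfl⟩)
end

section
/- Suppose δ(G(a_i), H(b_j)) ∈ {Y, Y+ρ} for all i,j ∈ [N] with ρ > 0, and suppose δ(x,y) is determined as min over shifts Δ ∈ {0,…,N} of Σ_{j=1}^{N} δ(G(a_{(Δ+j−1 mod N)+1}), H(b_j)) (structured alignments on a doubled list). Then δ(x,y) ≤ N(Y+ρ) − ρ if and only if there exist i, j with δ(G(a_i),H(b_j)) = Y; otherwise δ(x,y) = N(Y+ρ). -/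
/-- If all pairwise gadget distances lie in `{Y, Y+ρ}` with `ρ > 0`, and `D` is the minimum
over cyclic shifts `Δ ∈ {0,…,N}` of the structured-alignment cost on the doubled list,
then `D ≤ N(Y+ρ) − ρ` iff some pair has distance `Y`, and otherwise `D = N(Y+ρ)`. -/
theorem stmt11 (N Y ρ : ℕ) (hρ : 0 < ρ) (hN : 0 < N) (d : Fin N → Fin N → ℕ)
    (h : ∀ i j, d i j = Y ∨ d i j = Y + ρ) (D : ℕ)
    (hD : D = (Finset.range (N + 1)).inf' ⟨0, Finset.mem_range.mpr (Nat.succ_pos N)⟩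
      (fun Δ => ∑ j : Fin N, d ⟨(Δ + j.1) % N, Nat.mod_lt _ hN⟩ j)) :
    (D ≤ N * (Y + ρ) - ρ ↔ ∃ i j, d i j = Y) ∧
    ((¬ ∃ i j, d i j = Y) → D = N * (Y + ρ)) := by
  obtain ⟨M, rfl⟩ : ∃ M, N = M + 1 := ⟨N - 1, (Nat.succ_pred_eq_of_pos hN).symm⟩
  have hle : ∀ Δ ∈ Finset.range (M + 1 + 1),
      D ≤ ∑ j : Fin (M + 1), d ⟨(Δ + j.1) % (M + 1), Nat.mod_lt _ hN⟩ j := by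
    intro Δ hΔ
    rw [hD]
    exact Finset.inf'_le _ hΔ
  have hNval : (M + 1) * (Y + ρ) = M * (Y + ρ) + Y + ρ := by ring
  -- if no pair equals Y, then D = N*(Y+ρ)
  have hconst : (¬ ∃ i j, d i j = Y) → D = (M + 1) * (Y + ρ) := by
    intro hno
    push_neg at hno
    have hall : ∀ i j, d i j = Y + ρ := fun i j => (h i j).resolve_left (hno i j)
    have hsum : ∀ Δ ∈ Finset.range (M + 1 + 1),
        (∑ j : Fin (M + 1), d ⟨(Δ + j.1) % (M + 1), Nat.mod_lt _ hN⟩ j)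
          = (M + 1) * (Y + ρ) := by
      intro Δ _
      rw [Finset.sum_congr rfl (fun j _ => hall _ j)]
      simp [Finset.sum_const, Finset.card_univ, mul_comm]
    rw [hD]
    apply le_antisymm
    · exact (Finset.inf'_le _ (Finset.mem_range.mpr (Nat.succ_pos (M + 1)))).trans
        (le_of_eq (hsum 0 (Finset.mem_range.mpr (Nat.succ_pos (M + 1)))))
    · exact Finset.le_inf' _ _ (fun Δ hΔ => le_of_eq (hsum Δ hΔ).symm)
  constructor
  · constructor
    · intro hDle
      by_contra hno
      have hDeq := hconst hno
      omega
    · rintro ⟨i, j, hij⟩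
      have hΔmem : (M + 1 + i.1 - j.1) % (M + 1) ∈ Finset.range (M + 1 + 1) :=
        Finset.mem_range.mpr ((Nat.mod_lt _ hN).trans (Nat.lt_succ_self (M + 1)))
      refine (hle _ hΔmem).trans ?_
      have hkey : (((M + 1 + i.1 - j.1) % (M + 1) + j.1) % (M + 1)) = i.1 := by
        have hj : j.1 ≤ M + 1 + i.1 := le_trans (le_of_lt j.2) (Nat.le_add_right _ i.1)
        rw [Nat.mod_add_mod, Nat.sub_add_cancel hj, Nat.add_mod_left, Nat.mod_eq_of_lt i.2]
      have hterm : d ⟨((M + 1 + i.1 - j.1) % (M + 1) + j.1) % (M + 1), Nat.mod_lt _ hN⟩ j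
          = Y := by
        have heq : (⟨((M + 1 + i.1 - j.1) % (M + 1) + j.1) % (M + 1), Nat.mod_lt _ hN⟩ :
            Fin (M + 1)) = i := Fin.ext hkey
        rw [heq, hij]
      have hsplit := Finset.add_sum_erase Finset.univ
        (fun j' : Fin (M + 1) =>
          d ⟨((M + 1 + i.1 - j.1) % (M + 1) + j'.1) % (M + 1), Nat.mod_lt _ hN⟩ j')
        (Finset.mem_univ j)
      have hrest : ∑ j' ∈ Finset.univ.erase j,
          d ⟨((M + 1 + i.1 - j.1) % (M + 1) + j'.1) % (M + 1), Nat.mod_lt _ hN⟩ j'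
            ≤ M * (Y + ρ) := by
        have hcard : (Finset.univ.erase j).card = M := by
          rw [Finset.card_erase_of_mem (Finset.mem_univ j), Finset.card_univ,
            Fintype.card_fin]
          omega
        calc ∑ j' ∈ Finset.univ.erase j,
              d ⟨((M + 1 + i.1 - j.1) % (M + 1) + j'.1) % (M + 1), Nat.mod_lt _ hN⟩ j'
            ≤ (Finset.univ.erase j).card • (Y + ρ) := by
              apply Finset.sum_le_card_nsmul
              intro j' _
              rcases h ⟨((M + 1 + i.1 - j.1) % (M + 1) + j'.1) % (M + 1),
                Nat.mod_lt _ hN⟩ j' with h1 | h1 <;> omega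
          _ = M * (Y + ρ) := by rw [hcard, smul_eq_mul]
      omega
  · exact hconst
end
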